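/- For f continuous and compactly supported on ℝⁿ, the function t ↦ R_E f(u,t) is differentiable for t > 0 and ∂_t R_E f(u,t) = λ ν^{n−1} t^{n−1} ∫_{S^{n−1}} f(λ t y₁ + u₁, ν t ỹ + ũ, ν t y_n) dσ(y), where σ is the surface measure on the unit sphere S^{n−1} ⊂ ℝⁿ. -/

import Mathlib

open MeasureTheory Real
open scoped RealInnerProductSpace

noncomputable section

/-- `Ed d` is Euclidean space `ℝ^d` (used for the middle block of coordinates). -/
abbrev Ed (d : ℕ) := EuclideanSpace ℝ (Fin d)

/-- Points of `ℝⁿ` (with `n = d + 2`) are written `(x₁, x̃, xₙ) : ℝ × Ed d × ℝ`. -/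
abbrev X (d : ℕ) := ℝ × Ed d × ℝ

/-- Centers/foci parameters `u = (u₁, ũ)` live in the hyperplane `ℝ^{n-1}`. -/
abbrev U (d : ℕ) := ℝ × Ed d

/-- Euclidean norm on `ℝ × Ed d × ℝ`. -/
def normX (d : ℕ) (x : X d) : ℝ := Real.sqrt (x.1 ^ 2 + ‖x.2.1‖ ^ 2 + x.2.2 ^ 2)

/-- Euclidean norm on `ℝ × Ed d`. -/
def normU (d : ℕ) (u : U d) : ℝ := Real.sqrt (u.1 ^ 2 + ‖u.2‖ ^ 2)

/-- The solid ellipsoid `E_{u,t}`. -/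
def ellipsoid (d : ℕ) (lam nu : ℝ) (u : U d) (t : ℝ) : Set (X d) :=
  {x | (x.1 - u.1) ^ 2 / lam ^ 2 + ‖x.2.1 - u.2‖ ^ 2 / nu ^ 2 + x.2.2 ^ 2 / nu ^ 2 ≤ t ^ 2}

/-- The elliptical Radon transform `R_E f (u, t) = ∫_{E_{u,t}} f`. -/
def RE (d : ℕ) (lam nu : ℝ) (f : X d → ℝ) (u : U d) (t : ℝ) : ℝ :=
  ∫ x in ellipsoid d lam nu u t, f x

/-- The backprojection operator `R_E^*`. -/
def REstar (d : ℕ) (lam nu : ℝ) (g : U d × ℝ → ℝ) (x : X d) : ℝ :=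
  ∫ u : U d,
    g (u, Real.sqrt ((u.1 - x.1) ^ 2 / lam ^ 2 + ‖u.2 - x.2.1‖ ^ 2 / nu ^ 2 +
        x.2.2 ^ 2 / nu ^ 2))

/-- Bessel function of the first kind `J_μ`, defined by its power series. -/
def besselJ (μ x : ℝ) : ℝ :=
  ∑' m : ℕ, ((-1 : ℝ) ^ m / (m.factorial * Real.Gamma (m + μ + 1))) *
    (x / 2) ^ (2 * (m : ℝ) + μ)

/-- The radial Hankel-type transform `H_n` (complex-valued version). -/
def hankel (n : ℕ) (g : ℝ → ℂ) (ρ : ℝ) : ℂ :=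
  ((ρ ^ (1 - (n : ℝ) / 2) : ℝ) : ℂ) *
    ∫ t in Set.Ioi (0 : ℝ), ((t ^ ((n : ℝ) / 2) * besselJ (((n : ℝ) - 2) / 2) (t * ρ) : ℝ) : ℂ) * g t

/-- The radial Hankel-type transform `H_n` (real-valued version). -/
def hankelR (n : ℕ) (g : ℝ → ℝ) (ρ : ℝ) : ℝ :=
  ρ ^ (1 - (n : ℝ) / 2) *
    ∫ t in Set.Ioi (0 : ℝ), t ^ ((n : ℝ) / 2) * besselJ (((n : ℝ) - 2) / 2) (t * ρ) * g t

/-- Unnormalized `n`-dimensional Fourier transform on `ℝ × Ed d × ℝ`. -/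
def ftX (d : ℕ) (f : X d → ℝ) (ξ : X d) : ℂ :=
  ∫ x : X d, (f x : ℂ) *
    Complex.exp (-Complex.I * ((x.1 * ξ.1 + (inner ℝ x.2.1 ξ.2.1 : ℝ) + x.2.2 * ξ.2.2 : ℝ) : ℂ))

/-- Unnormalized `(n-1)`-dimensional Fourier transform on `ℝ × Ed d`. -/
def ftU (d : ℕ) (g : U d → ℂ) (ξ : U d) : ℂ :=
  ∫ u : U d, g u * Complex.exp (-Complex.I * ((u.1 * ξ.1 + (inner ℝ u.2 ξ.2 : ℝ) : ℝ) : ℂ))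


/-- Identification of `EuclideanSpace ℝ (Fin (d+2))` with `ℝ × Ed d × ℝ`. -/
def toProd (d : ℕ) (y : EuclideanSpace ℝ (Fin (d + 2))) : X d :=
  (y ⟨0, by omega⟩, (WithLp.toLp 2 (fun j : Fin d => y ⟨j.1 + 1, by omega⟩) : Ed d), y ⟨d + 1, by omega⟩)


/-! ### Auxiliary material for `stmt3` -/

open Set Metric
open scoped ENNReal

section Stmt3Aux

lemma smul_prod_left' {α β : Type*} [MeasurableSpace α] [MeasurableSpace β]
    (c : ℝ≥0∞) (μ : Measure α) (ν : Measure β) [SigmaFinite ν] :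
    (c • μ).prod ν = c • (μ.prod ν) :=
  Measure.ext fun s hs => by
    rw [Measure.prod_apply hs, lintegral_smul_measure, Measure.smul_apply,
      Measure.prod_apply hs, smul_eq_mul]

instance sigmaFinite_ofReal_smul' (r : ℝ) {α : Type*} [MeasurableSpace α] (ν : Measure α)
    [SigmaFinite ν] : SigmaFinite (ENNReal.ofReal r • ν) := by
  have : ENNReal.ofReal r • ν = (r.toNNReal) • ν := rfl
  rw [this]; infer_instance

lemma prod_smul_right' {α β : Type*} [MeasurableSpace α] [MeasurableSpace β]
    (r : ℝ) (μ : Measure α) (ν : Measure β) [SigmaFinite ν] :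
    μ.prod (ENNReal.ofReal r • ν) = ENNReal.ofReal r • (μ.prod ν) := by
  have h : ENNReal.ofReal r • ν = (r.toNNReal) • ν := rfl
  refine Measure.ext fun s hs => ?_
  rw [h, Measure.prod_apply hs, Measure.smul_apply, Measure.prod_apply hs]
  simp only [Measure.smul_apply, ENNReal.smul_def, smul_eq_mul]
  rw [lintegral_const_mul' _ _ (by exact ENNReal.coe_ne_top)]
  congr 1

lemma map_affine_real (lam c : ℝ) (hl : lam ≠ 0) :
    Measure.map (fun a : ℝ => lam * a + c) volume = ENNReal.ofReal |lam⁻¹| • volume := by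
  have h : (fun a : ℝ => lam * a + c) = (fun a : ℝ => a + c) ∘ (fun a : ℝ => lam * a) := rfl
  rw [h, ← Measure.map_map (measurable_add_const _) (measurable_const_mul _),
    Real.map_volume_mul_left hl, Measure.map_smul, map_add_right_eq_self]

lemma map_affine_Ed {d : ℕ} (nu : ℝ) (c : Ed d) (hn : nu ≠ 0) :
    Measure.map (fun b : Ed d => nu • b + c) volume
      = ENNReal.ofReal |(nu ^ d)⁻¹| • volume := by
  have h : (fun b : Ed d => nu • b + c) = (fun b : Ed d => b + c) ∘ (fun b : Ed d => nu • b) := rfl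
  rw [h, ← Measure.map_map (measurable_add_const _) (measurable_const_smul _),
    Measure.map_addHaar_smul volume hn, Measure.map_smul, map_add_right_eq_self,
    finrank_euclideanSpace, Fintype.card_fin]

/-- The affine change of variables. -/
def A2 (d : ℕ) (lam nu : ℝ) (u : U d) : X d → X d :=
  fun x => (lam * x.1 + u.1, nu • x.2.1 + u.2, nu * x.2.2)

lemma measurable_A2 (d : ℕ) (lam nu : ℝ) (u : U d) : Measurable (A2 d lam nu u) := by
  unfold A2; fun_prop

lemma map_A2 {d : ℕ} {lam nu : ℝ} (u : U d) (hl : 0 < lam) (hn : 0 < nu) :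
    Measure.map (A2 d lam nu u) (volume : Measure (X d))
      = ENNReal.ofReal ((lam * nu ^ (d + 1))⁻¹) • volume := by
  have h : A2 d lam nu u = Prod.map (fun a : ℝ => lam * a + u.1)
      (Prod.map (fun b : Ed d => nu • b + u.2) (fun c : ℝ => nu * c + 0)) := by
    funext x; simp [A2, Prod.map]
  rw [h, Measure.volume_eq_prod, ← Measure.map_prod_map _ _ (by fun_prop) (by fun_prop),
    Measure.volume_eq_prod, ← Measure.map_prod_map _ _ (by fun_prop) (by fun_prop),
    map_affine_real lam u.1 hl.ne', map_affine_Ed nu u.2 hn.ne', map_affine_real nu 0 hn.ne',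
    smul_prod_left', smul_prod_left', prod_smul_right', prod_smul_right', prod_smul_right',
    smul_smul, smul_smul]
  rw [← Measure.volume_eq_prod, ← Measure.volume_eq_prod]
  congr 1
  rw [← ENNReal.ofReal_mul (by positivity), ← ENNReal.ofReal_mul (by positivity)]
  congr 1
  rw [abs_of_pos (by positivity), abs_of_pos (by positivity), abs_of_pos (by positivity)]
  field_simp
  ring

/-- `toProd` as a measurable equivalence. -/
def toProdEquiv (d : ℕ) : EuclideanSpace ℝ (Fin (d + 2)) ≃ᵐ X d :=
  (MeasurableEquiv.toLp 2 (Fin (d+2) → ℝ)).symm.trans <|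
    (MeasurableEquiv.piFinSuccAbove (fun _ => ℝ) 0).trans <|
      (MeasurableEquiv.refl ℝ).prodCongr <|
        (MeasurableEquiv.piFinSuccAbove (fun _ : Fin (d+1) => ℝ) (Fin.last d)).trans <|
          MeasurableEquiv.prodComm.trans <|
            (MeasurableEquiv.toLp 2 (Fin d → ℝ)).prodCongr (MeasurableEquiv.refl ℝ)

lemma toProdEquiv_coe (d : ℕ) : ⇑(toProdEquiv d) = toProd d := by
  funext y
  refine Prod.ext ?_ (Prod.ext ?_ ?_)
  · rfl
  · ext j
    show y ((0 : Fin (d+2)).succAbove ((Fin.last d).succAbove j)) = _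
    simp only [Fin.succAbove_zero, Fin.succAbove_last, toProd]
    rfl
  · show y ((0 : Fin (d+2)).succAbove (Fin.last d)) = _
    simp only [Fin.succAbove_zero, toProd]
    rfl

lemma measurePreserving_toProd (d : ℕ) :
    MeasurePreserving (toProd d) (volume : Measure (EuclideanSpace ℝ (Fin (d+2))))
      (volume : Measure (X d)) := by
  rw [← toProdEquiv_coe]
  exact (EuclideanSpace.volume_preserving_symm_measurableEquiv_toLp (Fin (d+2))).trans <|
    ((volume_preserving_piFinSuccAbove (fun _ : Fin (d+2) => ℝ) 0).trans <|
      (MeasurePreserving.id volume).prod <|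
        ((volume_preserving_piFinSuccAbove (fun _ : Fin (d+1) => ℝ) (Fin.last d)).trans <|
          (Measure.measurePreserving_swap.trans <|
            ((EuclideanSpace.volume_preserving_symm_measurableEquiv_toLp (Fin d)).symm).prod
              (MeasurePreserving.id volume))))

lemma measurableEmbedding_toProd (d : ℕ) : MeasurableEmbedding (toProd d) := by
  rw [← toProdEquiv_coe]; exact (toProdEquiv d).measurableEmbedding

lemma continuous_toProd (d : ℕ) : Continuous (toProd d) := by
  unfold toProd; fun_prop

lemma A2_preimage {d : ℕ} {lam nu : ℝ} (u : U d) (hl : 0 < lam) (hn : 0 < nu) (s : ℝ) :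
    A2 d lam nu u ⁻¹' ellipsoid d lam nu u s
      = {x : X d | x.1 ^ 2 + ‖x.2.1‖ ^ 2 + x.2.2 ^ 2 ≤ s ^ 2} := by
  ext x
  simp only [mem_preimage, ellipsoid, A2, mem_setOf_eq, add_sub_cancel_right, norm_smul,
    Real.norm_eq_abs, mul_pow, sq_abs]
  have key : ∀ a b : ℝ, a ≠ 0 → a ^ 2 * b / a ^ 2 = b := fun a b ha => by field_simp
  rw [key lam _ hl.ne', key nu _ hn.ne', key nu _ hn.ne']

lemma toProd_preimage {d : ℕ} (s : ℝ) (hs : 0 < s) :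
    toProd d ⁻¹' {x : X d | x.1 ^ 2 + ‖x.2.1‖ ^ 2 + x.2.2 ^ 2 ≤ s ^ 2}
      = closedBall (0 : EuclideanSpace ℝ (Fin (d + 2))) s := by
  ext z
  have hnorm : ‖(toProd d z).2.1‖ ^ 2 = ∑ j : Fin d, z ⟨j.1 + 1, by omega⟩ ^ 2 := by
    rw [EuclideanSpace.norm_eq, sq_sqrt (by positivity)]
    simp [toProd, sq_abs]
  have hsum : (∑ i : Fin (d + 2), z i ^ 2)
      = z ⟨0, by omega⟩ ^ 2 + (∑ j : Fin d, z ⟨j.1 + 1, by omega⟩ ^ 2) + z ⟨d + 1, by omega⟩ ^ 2 := by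
    rw [Fin.sum_univ_succ, Fin.sum_univ_castSucc]
    have h1 : ∀ j : Fin d, (j.castSucc.succ : Fin (d + 2)) = ⟨j.1 + 1, by omega⟩ := by
      intro j; exact Fin.ext (by simp)
    have h2 : ((Fin.last d).succ : Fin (d + 2)) = ⟨d + 1, by omega⟩ := Fin.ext (by simp)
    rw [h2]
    have h3 : ∑ x : Fin d, z x.castSucc.succ ^ 2 = ∑ x : Fin d, z ⟨x.1 + 1, by omega⟩ ^ 2 :=
      Finset.sum_congr rfl (fun x _ => by rw [h1])
    rw [h3]
    have h0 : z 0 = z ⟨0, by omega⟩ := rfl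
    rw [h0]; ring
  simp only [mem_preimage, mem_setOf_eq, mem_closedBall, dist_zero_right]
  show (toProd d z).1 ^ 2 + ‖(toProd d z).2.1‖ ^ 2 + (toProd d z).2.2 ^ 2 ≤ s ^ 2 ↔ ‖z‖ ≤ s
  rw [hnorm]
  show z ⟨0, by omega⟩ ^ 2 + _ + z ⟨d + 1, by omega⟩ ^ 2 ≤ s ^ 2 ↔ ‖z‖ ≤ s
  rw [← hsum, EuclideanSpace.norm_eq]
  constructor
  · intro h
    calc Real.sqrt (∑ i, ‖z i‖ ^ 2) = Real.sqrt (∑ i, z i ^ 2) := by simp [sq_abs]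
    _ ≤ Real.sqrt (s ^ 2) := Real.sqrt_le_sqrt h
    _ = s := Real.sqrt_sq hs.le
  · intro h
    have h2 : Real.sqrt (∑ i, z i ^ 2) ≤ s := by
      have : (∑ i, ‖z i‖ ^ 2) = ∑ i, z i ^ 2 := by simp [sq_abs]
      rwa [this] at h
    have h3 : Real.sqrt (∑ i, z i ^ 2) ^ 2 ≤ s ^ 2 :=
      pow_le_pow_left₀ (Real.sqrt_nonneg _) h2 2
    rwa [sq_sqrt (by positivity)] at h3

lemma measurableSet_ellipsoid (d : ℕ) (lam nu : ℝ) (u : U d) (s : ℝ) :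
    MeasurableSet (ellipsoid d lam nu u s) := by
  apply IsClosed.measurableSet
  apply isClosed_le _ continuous_const
  fun_prop

lemma RE_eq {d : ℕ} {lam nu : ℝ} (hl : 0 < lam) (hn : 0 < nu) (f : X d → ℝ)
    (hf : Continuous f) (u : U d) (s : ℝ) (hs : 0 < s) :
    RE d lam nu f u s = (lam * nu ^ (d + 1)) *
      ∫ y in closedBall (0 : EuclideanSpace ℝ (Fin (d + 2))) s,
        f (A2 d lam nu u (toProd d y)) := by
  have hc : (0 : ℝ) < lam * nu ^ (d + 1) := by positivity
  have hvol : (volume : Measure (X d))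
      = ENNReal.ofReal (lam * nu ^ (d + 1)) • Measure.map (A2 d lam nu u) volume := by
    rw [map_A2 u hl hn, smul_smul, ← ENNReal.ofReal_mul hc.le, mul_inv_cancel₀ hc.ne',
      ENNReal.ofReal_one, one_smul]
  rw [RE]
  conv_lhs => rw [hvol]
  rw [Measure.restrict_smul, integral_smul_measure,
    setIntegral_map (measurableSet_ellipsoid d lam nu u s) hf.aestronglyMeasurable
      (measurable_A2 d lam nu u).aemeasurable,
    A2_preimage u hl hn s,
    ← (measurePreserving_toProd d).setIntegral_preimage_emb (measurableEmbedding_toProd d),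
    toProd_preimage s hs, ENNReal.toReal_ofReal hc.le, smul_eq_mul]

lemma dimE' (d : ℕ) : Module.finrank ℝ (EuclideanSpace ℝ (Fin (d + 2))) = d + 2 := by
  simp [finrank_euclideanSpace]

section PolarSec
variable {d : ℕ}
local notation "E'" => EuclideanSpace ℝ (Fin (d + 2))

lemma polar (g : EuclideanSpace ℝ (Fin (d + 2)) → ℝ) (hg : Continuous g)
    (C : ℝ) (hC : ∀ x, ‖g x‖ ≤ C) (s : ℝ) (hs : 0 < s) :
    ∫ y in closedBall (0 : EuclideanSpace ℝ (Fin (d + 2))) s, g y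
      = ∫ r in Ioc (0 : ℝ) s, r ^ (d + 1) *
          ∫ y : sphere (0 : EuclideanSpace ℝ (Fin (d + 2))) 1, g (r • (y : EuclideanSpace ℝ (Fin (d + 2))))
            ∂((volume : Measure (EuclideanSpace ℝ (Fin (d + 2)))).toSphere) := by
  set μ : Measure E' := (volume : Measure E') with hμ
  set σ : Measure (sphere (0 : E') 1) := μ.toSphere
  set φ : ℝ → ℝ := fun a => ∫ y : sphere (0 : E') 1, g (a • (y : E')) ∂σ with hφ
  set G : E' → ℝ := (closedBall (0 : E') s).indicator g with hG
  have hGmeas : ∫ y in closedBall (0 : E') s, g y ∂μ = ∫ y, G y ∂μ :=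
    (integral_indicator measurableSet_closedBall).symm
  rw [hGmeas]
  have h2 : ∫ y, G y ∂μ = ∫ x : ({0}ᶜ : Set E'), G x ∂(μ.comap Subtype.val) := by
    rw [integral_subtype_comap (measurableSet_singleton _).compl, restrict_compl_singleton]
  rw [h2]
  have hdim : Module.finrank ℝ (EuclideanSpace ℝ (Fin (d + 2))) - 1 = d + 1 := by
    rw [dimE']
    omega
  set H : sphere (0 : E') 1 × Ioi (0 : ℝ) → ℝ := fun p => G ((p.2 : ℝ) • (p.1 : E')) with hH
  have h3 : ∫ x : ({0}ᶜ : Set E'), G x ∂(μ.comap Subtype.val)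
      = ∫ p : sphere (0 : E') 1 × Ioi (0 : ℝ), H p ∂(σ.prod (.volumeIoiPow (d + 1))) := by
    rw [← hdim]
    have := (μ.measurePreserving_homeomorphUnitSphereProd).integral_comp
      (Homeomorph.measurableEmbedding _) H
    rw [← this]
    refine integral_congr_ae (Filter.Eventually.of_forall fun x => ?_)
    show G (x : E') = G ((((homeomorphUnitSphereProd E') x).2 : ℝ) •
      (((homeomorphUnitSphereProd E') x).1 : E'))
    rw [homeomorphUnitSphereProd_apply_snd_coe, homeomorphUnitSphereProd_apply_fst_coe,
      smul_inv_smul₀ (norm_ne_zero_iff.2 x.2)]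
  rw [h3]
  have hΦcont : Continuous fun p : sphere (0 : E') 1 × Ioi (0 : ℝ) => ((p.2 : ℝ) • (p.1 : E')) := by
    fun_prop
  have hHint : Integrable H (σ.prod (.volumeIoiPow (d + 1))) := by
    have hset : MeasurableSet ((fun p : sphere (0 : E') 1 × Ioi (0 : ℝ) =>
        ((p.2 : ℝ) • (p.1 : E'))) ⁻¹' closedBall (0 : E') s) :=
      hΦcont.measurable measurableSet_closedBall
    have hHeq : H = ((fun p : sphere (0 : E') 1 × Ioi (0 : ℝ) =>
        ((p.2 : ℝ) • (p.1 : E'))) ⁻¹' closedBall (0 : E') s).indicator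
          (fun p => g ((p.2 : ℝ) • (p.1 : E'))) := by
      funext p
      by_cases h : ((p.2 : ℝ) • (p.1 : E')) ∈ closedBall (0 : E') s
      · show (closedBall (0 : E') s).indicator g ((p.2 : ℝ) • (p.1 : E')) = _
        rw [Set.indicator_of_mem h]
        exact (Set.indicator_of_mem
          (show p ∈ (fun q : sphere (0 : E') 1 × Ioi (0 : ℝ) => ((q.2 : ℝ) • (q.1 : E'))) ⁻¹'
            closedBall (0 : E') s from h) (fun q => g ((q.2 : ℝ) • (q.1 : E')))).symm
      · show (closedBall (0 : E') s).indicator g ((p.2 : ℝ) • (p.1 : E')) = _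
        rw [Set.indicator_of_notMem h]
        exact (Set.indicator_of_notMem
          (show p ∉ (fun q : sphere (0 : E') 1 × Ioi (0 : ℝ) => ((q.2 : ℝ) • (q.1 : E'))) ⁻¹'
            closedBall (0 : E') s from h) (fun q => g ((q.2 : ℝ) • (q.1 : E')))).symm
    rw [hHeq, integrable_indicator_iff hset]
    have hsub : ((fun p : sphere (0 : E') 1 × Ioi (0 : ℝ) =>
        ((p.2 : ℝ) • (p.1 : E'))) ⁻¹' closedBall (0 : E') s)
        ⊆ univ ×ˢ (Iio ⟨s + 1, mem_Ioi.2 (by linarith)⟩ : Set (Ioi (0 : ℝ))) := by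
      rintro ⟨y, r⟩ hp
      simp only [mem_preimage, mem_closedBall, dist_zero_right, norm_smul,
        Real.norm_eq_abs] at hp
      have hy : ‖(y : E')‖ = 1 := mem_sphere_zero_iff_norm.1 y.2
      rw [hy, mul_one, abs_of_pos r.2] at hp
      exact ⟨trivial, show r < ⟨s + 1, _⟩ from Subtype.mk_lt_mk.2
        (by exact lt_of_le_of_lt hp (by linarith))⟩
    have hfin : (σ.prod (.volumeIoiPow (d + 1))) ((fun p : sphere (0 : E') 1 × Ioi (0 : ℝ) =>
        ((p.2 : ℝ) • (p.1 : E'))) ⁻¹' closedBall (0 : E') s) ≠ ⊤ := by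
      refine ne_top_of_le_ne_top ?_ (measure_mono hsub)
      rw [Measure.prod_prod, Measure.volumeIoiPow_apply_Iio]
      exact ENNReal.mul_ne_top (measure_ne_top σ _) ENNReal.ofReal_ne_top
    exact Measure.integrableOn_of_bounded hfin
      ((hg.comp hΦcont).aestronglyMeasurable)
      (Filter.Eventually.of_forall fun p => hC _)
  rw [integral_prod_symm H hHint]
  have h5 : (fun r : Ioi (0 : ℝ) => ∫ y : sphere (0 : E') 1, H (y, r) ∂σ)
      = fun r : Ioi (0 : ℝ) => if (r : ℝ) ≤ s then φ r else 0 := by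
    funext r
    have hmem : ∀ y : sphere (0 : E') 1,
        ((r : ℝ) • (y : E') ∈ closedBall (0 : E') s ↔ (r : ℝ) ≤ s) := by
      intro y
      rw [mem_closedBall, dist_zero_right, norm_smul, Real.norm_eq_abs,
        mem_sphere_zero_iff_norm.1 y.2, mul_one, abs_of_pos r.2]
    by_cases hr : (r : ℝ) ≤ s
    · rw [if_pos hr]
      refine integral_congr_ae (Filter.Eventually.of_forall fun y => ?_)
      show G ((r : ℝ) • (y : E')) = g ((r : ℝ) • (y : E'))
      exact Set.indicator_of_mem ((hmem y).2 hr) g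
    · rw [if_neg hr]
      have : (fun y : sphere (0 : E') 1 => H (y, r)) = fun _ => (0 : ℝ) := by
        funext y
        exact Set.indicator_of_notMem (fun h => hr ((hmem y).1 h)) g
      rw [this, integral_const, smul_zero]
  rw [h5]
  have hmeas : Measurable fun r : Ioi (0 : ℝ) => ((r : ℝ) ^ (d + 1)).toNNReal :=
    (measurable_subtype_coe.pow_const _).real_toNNReal
  simp only [Measure.volumeIoiPow, ENNReal.ofReal]
  rw [integral_withDensity_eq_integral_smul hmeas,
    integral_subtype_comap measurableSet_Ioi
      (fun a : ℝ => (a ^ (d + 1)).toNNReal • (if a ≤ s then φ a else 0))]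
  have h6 : ∫ a in Ioi (0 : ℝ), (a ^ (d + 1)).toNNReal • (if a ≤ s then φ a else 0)
      = ∫ a in Ioi (0 : ℝ), (Iic s).indicator (fun a => a ^ (d + 1) * φ a) a := by
    refine setIntegral_congr_fun measurableSet_Ioi fun a ha => ?_
    rw [NNReal.smul_def, Real.coe_toNNReal _ (pow_nonneg (le_of_lt ha) _)]
    by_cases h : a ≤ s
    · rw [if_pos h, Set.indicator_of_mem (mem_Iic.2 h), smul_eq_mul, pow_succ]
    · rw [if_neg h, Set.indicator_of_notMem (fun hh => h (mem_Iic.1 hh)), smul_zero]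
  rw [h6, setIntegral_indicator measurableSet_Iic, Ioi_inter_Iic]

end PolarSec

lemma continuous_sphereIntegral {d : ℕ} (g : EuclideanSpace ℝ (Fin (d + 2)) → ℝ)
    (hg : Continuous g) (C : ℝ) (hC : ∀ x, ‖g x‖ ≤ C) :
    Continuous fun a : ℝ => ∫ y : sphere (0 : EuclideanSpace ℝ (Fin (d + 2))) 1,
      g (a • (y : EuclideanSpace ℝ (Fin (d + 2))))
        ∂((volume : Measure (EuclideanSpace ℝ (Fin (d + 2)))).toSphere) := by
  rw [continuous_iff_continuousAt]
  intro a₀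
  apply continuousAt_of_dominated (bound := fun _ => C)
  · exact Filter.Eventually.of_forall fun a =>
      ((hg.comp (by fun_prop) : Continuous fun y : sphere
        (0 : EuclideanSpace ℝ (Fin (d + 2))) 1 => g (a • (y : EuclideanSpace ℝ (Fin (d + 2))))).aestronglyMeasurable)
  · exact Filter.Eventually.of_forall fun a =>
      Filter.Eventually.of_forall fun y => hC _
  · exact integrable_const _
  · exact Filter.Eventually.of_forall fun y =>
      (hg.comp (continuous_id.smul continuous_const)).continuousAt

end Stmt3Aux

/-- `t ↦ R_E f (u, t)` is differentiable for `t > 0`, with derivative a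
sphere integral against the surface measure on `S^{n-1}`. -/
theorem stmt3 (d : ℕ) (lam nu : ℝ) (hlam : 1 < lam) (hnu : nu = Real.sqrt (lam ^ 2 - 1))
    (f : X d → ℝ) (hf : Continuous f) (hsupp : HasCompactSupport f)
    (u : U d) (t : ℝ) (ht : 0 < t) :
    HasDerivAt (fun s => RE d lam nu f u s)
      (lam * nu ^ (d + 1) * t ^ (d + 1) *
        ∫ y : Metric.sphere (0 : EuclideanSpace ℝ (Fin (d + 2))) 1,
          f (lam * t * (toProd d y).1 + u.1, (nu * t) • (toProd d y).2.1 + u.2,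
            nu * t * (toProd d y).2.2)
          ∂((volume : Measure (EuclideanSpace ℝ (Fin (d + 2)))).toSphere)) t := by
  have hl : (0:ℝ) < lam := lt_trans one_pos hlam
  have hsq : (0:ℝ) < lam ^ 2 - 1 := by nlinarith
  have hn : (0:ℝ) < nu := by rw [hnu]; exact Real.sqrt_pos.2 hsq
  set c : ℝ := lam * nu ^ (d + 1) with hc
  have hc0 : (0:ℝ) < c := by positivity
  set g : EuclideanSpace ℝ (Fin (d + 2)) → ℝ :=
    fun y => f (A2 d lam nu u (toProd d y)) with hgdef
  have hA2c : Continuous (A2 d lam nu u) := by unfold A2; fun_prop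
  have hgc : Continuous g := hf.comp (hA2c.comp (continuous_toProd d))
  obtain ⟨C, hC⟩ := hsupp.exists_bound_of_continuous hf
  have hgC : ∀ x, ‖g x‖ ≤ C := fun x => hC _
  set φ : ℝ → ℝ := fun a => ∫ y : sphere (0 : EuclideanSpace ℝ (Fin (d + 2))) 1,
    g (a • (y : EuclideanSpace ℝ (Fin (d + 2))))
      ∂((volume : Measure (EuclideanSpace ℝ (Fin (d + 2)))).toSphere) with hφdef
  have hφc : Continuous φ := continuous_sphereIntegral g hgc C hgC
  set ψ : ℝ → ℝ := fun r => r ^ (d + 1) * φ r with hψdef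
  have hψc : Continuous ψ := by fun_prop
  have hFTC : HasDerivAt (fun s => ∫ r in (0:ℝ)..s, ψ r) (ψ t) t :=
    intervalIntegral.integral_hasDerivAt_right (hψc.intervalIntegrable 0 t)
      (hψc.stronglyMeasurableAtFilter volume (nhds t)) hψc.continuousAt
  have hder : HasDerivAt (fun s => c * ∫ r in (0:ℝ)..s, ψ r) (c * ψ t) t := hFTC.const_mul c
  have heq : (fun s => RE d lam nu f u s) =ᶠ[nhds t] fun s => c * ∫ r in (0:ℝ)..s, ψ r := by
    filter_upwards [Ioi_mem_nhds ht] with s hs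
    rw [RE_eq hl hn f hf u s hs, polar g hgc C hgC s hs,
      intervalIntegral.integral_of_le (le_of_lt hs)]
  have hmain := hder.congr_of_eventuallyEq heq
  have hkey : ∀ y : sphere (0 : EuclideanSpace ℝ (Fin (d + 2))) 1,
      g (t • (y : EuclideanSpace ℝ (Fin (d + 2)))) =
      f (lam * t * (toProd d y).1 + u.1, (nu * t) • (toProd d y).2.1 + u.2,
        nu * t * (toProd d y).2.2) := by
    intro y
    have h1 : (toProd d (t • (y : EuclideanSpace ℝ (Fin (d + 2))))).1
        = t * (toProd d (y : EuclideanSpace ℝ (Fin (d + 2)))).1 := rfl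
    have h2 : (toProd d (t • (y : EuclideanSpace ℝ (Fin (d + 2))))).2.1
        = t • (toProd d (y : EuclideanSpace ℝ (Fin (d + 2)))).2.1 := rfl
    have h3 : (toProd d (t • (y : EuclideanSpace ℝ (Fin (d + 2))))).2.2
        = t * (toProd d (y : EuclideanSpace ℝ (Fin (d + 2)))).2.2 := rfl
    show f (lam * (toProd d (t • (y : EuclideanSpace ℝ (Fin (d + 2))))).1 + u.1,
      nu • (toProd d (t • (y : EuclideanSpace ℝ (Fin (d + 2))))).2.1 + u.2,
      nu * (toProd d (t • (y : EuclideanSpace ℝ (Fin (d + 2))))).2.2) = _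
    rw [h1, h2, h3, smul_smul, ← mul_assoc, ← mul_assoc]
  have hφt : φ t = ∫ y : sphere (0 : EuclideanSpace ℝ (Fin (d + 2))) 1,
      f (lam * t * (toProd d y).1 + u.1, (nu * t) • (toProd d y).2.1 + u.2,
        nu * t * (toProd d y).2.2)
      ∂((volume : Measure (EuclideanSpace ℝ (Fin (d + 2)))).toSphere) :=
    integral_congr_ae (Filter.Eventually.of_forall hkey)
  have hval : c * ψ t = lam * nu ^ (d + 1) * t ^ (d + 1) *
      ∫ y : sphere (0 : EuclideanSpace ℝ (Fin (d + 2))) 1,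
        f (lam * t * (toProd d y).1 + u.1, (nu * t) • (toProd d y).2.1 + u.2,
          nu * t * (toProd d y).2.2)
      ∂((volume : Measure (EuclideanSpace ℝ (Fin (d + 2)))).toSphere) := by
    rw [hψdef, hc]
    simp only []
    rw [← hφt]
    ring
  exact hval ▸ hmain

end
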